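/- Let B be a positive definite n×n complex matrix and x ∈ ℂⁿ a unit vector. Then for every t ∈ [0,1], with r = min{t, 1−t}, one has ⟨B^t x, x⟩ ≤ (⟨B^{1/2}x, x⟩ / ⟨Bx, x⟩^{1/2})^{2r} · ⟨Bx, x⟩^{t}. -/

import Mathlib

open Matrix ComplexOrder

/-- Real power of a (Hermitian) matrix via the continuous functional calculus. -/
noncomputable def mrpow {n : ℕ} (A : Matrix (Fin n) (Fin n) ℂ) (t : ℝ) :
    Matrix (Fin n) (Fin n) ℂ :=
  cfc (fun x : ℝ => x ^ t) A

lemma cfc_quad {n : ℕ} (B : Matrix (Fin n) (Fin n) ℂ) (hH : B.IsHermitian)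
    (x : Fin n → ℂ) (f : ℝ → ℝ) :
    (star x ⬝ᵥ (cfc f B *ᵥ x)).re =
      ∑ i, f (hH.eigenvalues i) *
        Complex.normSq ((star (hH.eigenvectorUnitary : Matrix (Fin n) (Fin n) ℂ) *ᵥ x) i) := by
  rw [hH.cfc_eq, Matrix.IsHermitian.cfc, Unitary.conjStarAlgAut_apply]
  set U := (hH.eigenvectorUnitary : Matrix (Fin n) (Fin n) ℂ) with hU
  set y := star U *ᵥ x with hy
  have h2 : star y = star x ᵥ* U := by
    rw [hy, star_mulVec, star_eq_conjTranspose, conjTranspose_conjTranspose]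
  rw [← Matrix.mulVec_mulVec, ← Matrix.mulVec_mulVec, dotProduct_mulVec, ← h2, ← hy]
  have h3 : ∀ i, star y i * (diagonal (RCLike.ofReal ∘ f ∘ hH.eigenvalues) *ᵥ y) i
      = ((f (hH.eigenvalues i) * Complex.normSq (y i) : ℝ) : ℂ) := by
    intro i
    rw [Matrix.mulVec_diagonal]
    push_cast
    simp only [Pi.star_apply, Function.comp_apply, RCLike.star_def]
    rw [mul_left_comm, mul_comm ((starRingEnd ℂ) (y i)), Complex.mul_conj]; rfl
  rw [dotProduct]
  simp_rw [h3]
  rw [← Complex.ofReal_sum]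
  exact Complex.ofReal_re _

lemma interp {n : ℕ} (p l : Fin n → ℝ) (hp : ∀ i, 0 ≤ p i) (hl : ∀ i, 0 < l i)
    (a b θ : ℝ) (hθ0 : 0 ≤ θ) (hθ1 : θ ≤ 1) :
    ∑ i, l i ^ (θ * a + (1 - θ) * b) * p i ≤
      (∑ i, l i ^ a * p i) ^ θ * (∑ i, l i ^ b * p i) ^ (1 - θ) := by
  rcases eq_or_lt_of_le hθ0 with h0 | h0
  · rw [← h0]; norm_num
  rcases eq_or_lt_of_le hθ1 with h1 | h1
  · rw [h1]; norm_num
  have h1θ : 0 < 1 - θ := by linarith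
  have hpq : Real.HolderConjugate (1 / θ) (1 / (1 - θ)) :=
    Real.holderConjugate_one_div h0 h1θ (by ring)
  have key := Real.inner_le_Lp_mul_Lq_of_nonneg (f := fun i => (l i ^ a * p i) ^ θ)
    (g := fun i => (l i ^ b * p i) ^ (1 - θ)) Finset.univ hpq
    (fun i _ => Real.rpow_nonneg (mul_nonneg (Real.rpow_nonneg (hl i).le a) (hp i)) θ)
    (fun i _ => Real.rpow_nonneg (mul_nonneg (Real.rpow_nonneg (hl i).le b) (hp i)) (1 - θ))
  have e1 : ∀ i : Fin n, (l i ^ a * p i) ^ θ * (l i ^ b * p i) ^ (1 - θ)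
      = l i ^ (θ * a + (1 - θ) * b) * p i := by
    intro i
    rw [Real.mul_rpow (Real.rpow_nonneg (hl i).le a) (hp i),
      Real.mul_rpow (Real.rpow_nonneg (hl i).le b) (hp i),
      ← Real.rpow_mul (hl i).le, ← Real.rpow_mul (hl i).le]
    calc l i ^ (a * θ) * p i ^ θ * (l i ^ (b * (1 - θ)) * p i ^ (1 - θ))
        = (l i ^ (a * θ) * l i ^ (b * (1 - θ))) * (p i ^ θ * p i ^ (1 - θ)) := by ring
      _ = l i ^ (θ * a + (1 - θ) * b) * p i := by
          rw [← Real.rpow_add (hl i), ← Real.rpow_add_of_nonneg (hp i) h0.le h1θ.le,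
            show a * θ + b * (1 - θ) = θ * a + (1 - θ) * b from by ring,
            show θ + (1 - θ) = (1 : ℝ) from by ring, Real.rpow_one]
  have hXa : ∀ i : Fin n, ((l i ^ a * p i) ^ θ) ^ (1 / θ) = l i ^ a * p i := fun i => by
    rw [← Real.rpow_mul (mul_nonneg (Real.rpow_nonneg (hl i).le a) (hp i)),
      mul_one_div_cancel h0.ne', Real.rpow_one]
  have hXb : ∀ i : Fin n, ((l i ^ b * p i) ^ (1 - θ)) ^ (1 / (1 - θ)) = l i ^ b * p i :=
    fun i => by
    rw [← Real.rpow_mul (mul_nonneg (Real.rpow_nonneg (hl i).le b) (hp i)),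
      mul_one_div_cancel h1θ.ne', Real.rpow_one]
  calc ∑ i, l i ^ (θ * a + (1 - θ) * b) * p i
      = ∑ i, (l i ^ a * p i) ^ θ * (l i ^ b * p i) ^ (1 - θ) :=
        Finset.sum_congr rfl fun i _ => (e1 i).symm
    _ ≤ (∑ i, ((l i ^ a * p i) ^ θ) ^ (1 / θ)) ^ (1 / (1 / θ)) *
        (∑ i, ((l i ^ b * p i) ^ (1 - θ)) ^ (1 / (1 - θ))) ^ (1 / (1 / (1 - θ))) := key
    _ = (∑ i, l i ^ a * p i) ^ θ * (∑ i, l i ^ b * p i) ^ (1 - θ) := by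
        rw [Finset.sum_congr rfl fun i _ => hXa i, Finset.sum_congr rfl fun i _ => hXb i,
          one_div_one_div, one_div_one_div]

/-- For a positive definite `B`, a unit vector `x`, `t ∈ [0,1]` and
`r = min {t, 1-t}`: `⟨Bᵗx, x⟩ ≤ (⟨B^{1/2}x, x⟩ / ⟨Bx, x⟩^{1/2})^{2r} ⟨Bx, x⟩ᵗ`. -/
theorem stmt4 (n : ℕ) (B : Matrix (Fin n) (Fin n) ℂ) (hB : B.PosDef)
    (x : Fin n → ℂ) (hx : star x ⬝ᵥ x = 1)
    (t : ℝ) (ht : t ∈ Set.Icc (0 : ℝ) 1) (r : ℝ) (hr : r = min t (1 - t)) :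
    (star x ⬝ᵥ (mrpow B t *ᵥ x)).re ≤
      ((star x ⬝ᵥ (mrpow B (1 / 2) *ᵥ x)).re / (star x ⬝ᵥ (B *ᵥ x)).re ^ (1 / 2 : ℝ)) ^ (2 * r) *
        (star x ⬝ᵥ (B *ᵥ x)).re ^ t := by
  obtain ⟨ht0, ht1⟩ := ht
  have hH := hB.1
  have hsa : IsSelfAdjoint B := hH
  set l : Fin n → ℝ := hH.eigenvalues with hldef
  set p : Fin n → ℝ := fun i =>
    Complex.normSq ((star (hH.eigenvectorUnitary : Matrix (Fin n) (Fin n) ℂ) *ᵥ x) i) with hpdef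
  have key : ∀ f : ℝ → ℝ, (star x ⬝ᵥ (cfc f B *ᵥ x)).re = ∑ i, f (l i) * p i :=
    fun f => cfc_quad B hH x f
  have hp : ∀ i, 0 ≤ p i := fun i => Complex.normSq_nonneg _
  have hl : ∀ i, 0 < l i := fun i => hB.eigenvalues_pos i
  have hsum1 : ∑ i, p i = 1 := by
    have h := key (fun _ => 1)
    rw [cfc_const_one ℝ B, Matrix.one_mulVec, hx] at h
    simpa using h.symm
  have hSB : (star x ⬝ᵥ (B *ᵥ x)).re = ∑ i, l i ^ (1 : ℝ) * p i := by
    have h := key (fun z => z ^ (1 : ℝ))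
    rwa [show (fun z : ℝ => z ^ (1 : ℝ)) = id from funext fun z => Real.rpow_one z,
      cfc_id ℝ B] at h
  have hex : ∃ i, 0 < p i := by
    by_contra h
    push_neg at h
    have h0 : ∑ i, p i = 0 := Finset.sum_eq_zero fun i _ => le_antisymm (h i) (hp i)
    rw [h0] at hsum1
    norm_num at hsum1
  have hSpos : ∀ s : ℝ, 0 < ∑ i, l i ^ s * p i := by
    intro s
    obtain ⟨j, hj⟩ := hex
    exact Finset.sum_pos' (fun i _ => mul_nonneg (Real.rpow_nonneg (hl i).le s) (hp i))
      ⟨j, Finset.mem_univ j, mul_pos (Real.rpow_pos_of_pos (hl j) s) hj⟩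
  unfold mrpow
  rw [key fun z => z ^ t, key fun z => z ^ (1 / 2 : ℝ), hSB]
  set A := ∑ i, l i ^ (1 / 2 : ℝ) * p i with hAdef
  set C := ∑ i, l i ^ (1 : ℝ) * p i with hCdef
  have hA : 0 < A := hSpos _
  have hC : 0 < C := hSpos _
  have hRHS : (A / C ^ (1 / 2 : ℝ)) ^ (2 * r) * C ^ t = A ^ (2 * r) * C ^ (t - r) := by
    rw [Real.div_rpow hA.le (Real.rpow_nonneg hC.le _), ← Real.rpow_mul hC.le,
      show (1 / 2 : ℝ) * (2 * r) = r from by ring, div_mul_eq_mul_div, mul_div_assoc,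
      ← Real.rpow_sub hC]
  rw [hRHS]
  rcases le_or_gt t (1 / 2) with hhalf | hhalf
  · have hrt : r = t := by rw [hr, min_eq_left (by linarith)]
    have h := interp p l hp hl (1 / 2) 0 (2 * t) (by linarith) (by linarith)
    rw [show (2 * t) * (1 / 2 : ℝ) + (1 - 2 * t) * 0 = t from by ring] at h
    have h0 : ∑ i, l i ^ (0 : ℝ) * p i = 1 := by
      simp_rw [Real.rpow_zero, one_mul]; exact hsum1
    rw [h0, Real.one_rpow, mul_one] at h
    rw [hrt, sub_self, Real.rpow_zero, mul_one]
    exact h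
  · have hrt : r = 1 - t := by rw [hr, min_eq_right (by linarith)]
    have h := interp p l hp hl (1 / 2) 1 (2 - 2 * t) (by linarith) (by linarith)
    rw [show (2 - 2 * t) * (1 / 2 : ℝ) + (1 - (2 - 2 * t)) * 1 = t from by ring] at h
    rw [hrt, show 2 * (1 - t) = 2 - 2 * t from by ring,
      show t - (1 - t) = 1 - (2 - 2 * t) from by ring]
    exact h
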